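/- arXiv:2206.14027 — 5 statements merged into one kernel-verified Lean document; each statement's English description precedes it below -/
import Mathlib

section
/- Let k be an algebraically closed field of characteristic ℓ, and let p, q be primes with p ≠ ℓ, q ≠ ℓ, and p ≠ q. Suppose k contains a primitive p-th root of unity ζ. If X, Y ∈ k[T] satisfy X^p − Y^q = 1, then X and Y are constants. -/
open Polynomial

private lemma stmt7_cast_ne_zero (k : Type*) [Field k] (ℓ : ℕ) [CharP k ℓ]
    (p : ℕ) (hp : p.Prime) (hpℓ : p ≠ ℓ) : (p : k) ≠ 0 := by
  rw [Ne, CharP.cast_eq_zero_iff k ℓ p]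
  rcases CharP.char_is_prime_or_zero k ℓ with hℓ | rfl
  · intro hdvd
    exact hpℓ ((Nat.prime_dvd_prime_iff_eq hℓ hp).mp hdvd).symm
  · exact fun hdvd => hp.ne_zero (zero_dvd_iff.mp hdvd)

private lemma stmt7_aux (k : Type*) [Field k] (ℓ : ℕ) [CharP k ℓ]
    (p q : ℕ) (hp : p.Prime) (hq : q.Prime) (hpℓ : p ≠ ℓ) (hqℓ : q ≠ ℓ) :
    ∀ n (X Y : Polynomial k), X.natDegree = n → X ^ p - Y ^ q = 1 → X.natDegree = 0 := by
  classical
  intro n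
  induction n using Nat.strong_induction_on with
  | _ n ih =>
    intro X Y hn h
    rcases eq_or_ne X 0 with rfl | hX
    · simp
    rcases eq_or_ne Y 0 with rfl | hY
    · have hX1 : X ^ p = 1 := by simpa [zero_pow hq.ne_zero] using h
      have : p * X.natDegree = 0 := by
        rw [← natDegree_pow, hX1, natDegree_one]
      exact (Nat.mul_eq_zero.mp this).resolve_left hp.ne_zero
    have ha : X ^ p ≠ 0 := pow_ne_zero _ hX
    have hb : -Y ^ q ≠ 0 := neg_ne_zero.mpr (pow_ne_zero _ hY)
    have hc : (-1 : Polynomial k) ≠ 0 := by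
      simp
    have hab : IsCoprime (X ^ p) (-Y ^ q) := ⟨1, 1, by linear_combination h⟩
    have hbc : IsCoprime (-Y ^ q) (-1 : Polynomial k) := isCoprime_one_right.neg_right
    have hca : IsCoprime (-1 : Polynomial k) (X ^ p) := isCoprime_one_left.neg_left
    have hsum : X ^ p + (-Y ^ q) + (-1) = 0 := by linear_combination h
    have hXY : IsCoprime (X ^ p) (Y ^ q) := by
      have := hab.neg_right; simpa using this
    rcases Polynomial.abc ha hb hc hab hsum with ⟨h1, h2, -⟩ | ⟨h1, h2, -⟩
    · -- radical case: contradiction by degrees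
      exfalso
      have hrad : (UniqueFactorizationMonoid.radical (X ^ p * -Y ^ q * -1)).natDegree
          ≤ X.natDegree + Y.natDegree := by
        have e : X ^ p * -Y ^ q * -1 = X ^ p * Y ^ q := by ring
        rw [e, UniqueFactorizationMonoid.radical_mul hXY.isRelPrime,
          UniqueFactorizationMonoid.radical_pow X hp.ne_zero,
          UniqueFactorizationMonoid.radical_pow Y hq.ne_zero,
          Polynomial.natDegree_mul (UniqueFactorizationMonoid.radical_ne_zero (a := X))
            (UniqueFactorizationMonoid.radical_ne_zero (a := Y))]
        exact Nat.add_le_add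
          (Polynomial.natDegree_le_of_dvd (UniqueFactorizationMonoid.radical_dvd_self (a := X)) hX)
          (Polynomial.natDegree_le_of_dvd (UniqueFactorizationMonoid.radical_dvd_self (a := Y)) hY)
      rw [natDegree_pow] at h1
      rw [natDegree_neg, natDegree_pow] at h2
      have hh1 : p * X.natDegree + 1 ≤ X.natDegree + Y.natDegree := le_trans h1 hrad
      have hh2 : q * Y.natDegree + 1 ≤ X.natDegree + Y.natDegree := le_trans h2 hrad
      have e1 : 2 * X.natDegree ≤ p * X.natDegree := Nat.mul_le_mul_right _ hp.two_le
      have e2 : 2 * Y.natDegree ≤ q * Y.natDegree := Nat.mul_le_mul_right _ hq.two_le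
      omega
    · -- derivative-zero case: descend via contract/expand
      have hX' : derivative X = 0 := by
        have e : C (p : k) * X ^ (p - 1) * derivative X = 0 := by
          rw [← derivative_pow]; exact h1
        rcases mul_eq_zero.mp e with e' | e'
        · rcases mul_eq_zero.mp e' with e'' | e''
          · rw [C_eq_zero] at e''
            exact absurd e'' (stmt7_cast_ne_zero k ℓ p hp hpℓ)
          · exact absurd e'' (pow_ne_zero _ hX)
        · exact e'
      have hY' : derivative Y = 0 := by
        have e : C (q : k) * Y ^ (q - 1) * derivative Y = 0 := by
          rw [← derivative_pow, ← neg_eq_zero, ← derivative_neg]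
          exact h2
        rcases mul_eq_zero.mp e with e' | e'
        · rcases mul_eq_zero.mp e' with e'' | e''
          · rw [C_eq_zero] at e''
            exact absurd e'' (stmt7_cast_ne_zero k ℓ q hq hqℓ)
          · exact absurd e'' (pow_ne_zero _ hY)
        · exact e'
      rcases CharP.char_is_prime_or_zero k ℓ with hℓ | rfl
      · -- positive characteristic: Frobenius descent
        have hXe : expand k ℓ (contract ℓ X) = X := expand_contract ℓ hX' hℓ.ne_zero
        have hYe : expand k ℓ (contract ℓ Y) = Y := expand_contract ℓ hY' hℓ.ne_zero
        have h1' : (contract ℓ X) ^ p - (contract ℓ Y) ^ q = 1 := by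
          apply expand_injective hℓ.pos
          rw [map_sub, map_pow, map_pow, hXe, hYe, map_one]
          exact h
        have hd : X.natDegree = (contract ℓ X).natDegree * ℓ := by
          conv_lhs => rw [← hXe]
          rw [natDegree_expand]
        rcases Nat.eq_zero_or_pos (contract ℓ X).natDegree with h0 | hpos
        · rw [hd, h0, zero_mul]
        · have hlt : (contract ℓ X).natDegree < n := by
            rw [← hn, hd]
            calc (contract ℓ X).natDegree < (contract ℓ X).natDegree * 2 := by omega
              _ ≤ (contract ℓ X).natDegree * ℓ := Nat.mul_le_mul_left _ hℓ.two_le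
          have h0 := ih _ hlt (contract ℓ X) (contract ℓ Y) rfl h1'
          rw [hd, h0, zero_mul]
      · -- characteristic zero
        haveI : CharZero k := CharP.charP_to_charZero k
        exact natDegree_eq_zero_of_derivative_eq_zero hX'

theorem stmt_7 (k : Type*) [Field k] [IsAlgClosed k] (ℓ : ℕ) [CharP k ℓ]
    (p q : ℕ) (hp : p.Prime) (hq : q.Prime) (hpℓ : p ≠ ℓ) (hqℓ : q ≠ ℓ) (hpq : p ≠ q)
    (ζ : k) (hζ : IsPrimitiveRoot ζ p)
    (X Y : Polynomial k) (h : X ^ p - Y ^ q = 1) :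
    (∃ a : k, X = C a) ∧ (∃ b : k, Y = C b) := by
  have hdX : X.natDegree = 0 := stmt7_aux k ℓ p q hp hq hpℓ hqℓ _ X Y rfl h
  obtain ⟨a, ha⟩ := Polynomial.natDegree_eq_zero.mp hdX
  have hdYq : (Y ^ q).natDegree = 0 := by
    have : Y ^ q = C (a ^ p) - 1 := by
      rw [map_pow, ha]
      linear_combination -h
    rw [this, ← C_1, ← C_sub, natDegree_C]
  have hdY : Y.natDegree = 0 := by
    rw [natDegree_pow] at hdYq
    exact (Nat.mul_eq_zero.mp hdYq).resolve_left hq.ne_zero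
  obtain ⟨b, hb⟩ := Polynomial.natDegree_eq_zero.mp hdY
  exact ⟨⟨a, ha.symm⟩, ⟨b, hb.symm⟩⟩
end

section
/- Let k be an algebraically closed field of characteristic ℓ and p an odd prime with p ≠ ℓ and ℓ ≠ 2. Suppose η ∈ k satisfies η² = −1. If X, Y ∈ k[T] satisfy X^p = Y² + 1, then X and Y are constants. -/
open Polynomial

theorem stmt_10 (k : Type*) [Field k] [IsAlgClosed k] (ℓ : ℕ) [CharP k ℓ]
    (p : ℕ) (hp : p.Prime) (hodd : Odd p) (hpℓ : p ≠ ℓ) (hℓ2 : ℓ ≠ 2)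
    (η : k) (hη : η ^ 2 = -1)
    (X Y : Polynomial k) (h : X ^ p = Y ^ 2 + 1) :
    (∃ a : k, X = C a) ∧ (∃ b : k, Y = C b) := by
  have hℓ1 : ℓ ≠ 1 := CharP.char_ne_one k ℓ
  have h2 : (2 : k) ≠ 0 := by
    intro hc
    have hd : ℓ ∣ 2 := by
      rwa [show ((2 : k)) = ((2 : ℕ) : k) by norm_num, CharP.cast_eq_zero_iff k ℓ] at hc
    rcases (Nat.Prime.eq_one_or_self_of_dvd Nat.prime_two ℓ hd) with h1 | h1
    · exact hℓ1 h1
    · exact hℓ2 h1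
  have hη0 : η ≠ 0 := by
    intro h0
    rw [h0] at hη
    have : (1 : k) = 0 := by linear_combination hη
    exact one_ne_zero this
  have h2η : (2 * η : k) ≠ 0 := mul_ne_zero h2 hη0
  have hC2 : (C 2 : k[X]) = 2 := map_ofNat C 2
  -- factorization
  have hC : (C η : k[X]) ^ 2 = -1 := by rw [← C_pow, hη, map_neg, map_one]
  have hfac : (Y + C η) * (Y - C η) = X ^ p := by linear_combination -h - hC
  have hcop : IsCoprime (Y + C η) (Y - C η) := by
    refine ⟨C ((2 * η)⁻¹), -C ((2 * η)⁻¹), ?_⟩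
    have : (C ((2 * η)⁻¹) : k[X]) * (Y + C η) + -C ((2 * η)⁻¹) * (Y - C η)
        = C ((2 * η)⁻¹ * (2 * η)) := by
      rw [map_mul, map_mul, hC2]
      ring
    rw [this, inv_mul_cancel₀ h2η, map_one]
  obtain ⟨d, hd⟩ := exists_associated_pow_of_mul_eq_pow' hcop hfac
  obtain ⟨e, he⟩ := exists_associated_pow_of_mul_eq_pow' hcop.symm
    (by rw [mul_comm]; exact hfac)
  -- turn associates into genuine p-th powers
  have pow_of_assoc : ∀ f g : k[X], Associated (f ^ p) g → ∃ A : k[X], A ^ p = g := by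
    intro f g ⟨u, hu⟩
    obtain ⟨r, hr, hru⟩ := Polynomial.isUnit_iff.mp u.isUnit
    obtain ⟨s, hs⟩ := IsAlgClosed.exists_pow_nat_eq r hp.pos
    refine ⟨f * C s, ?_⟩
    rw [mul_pow, ← C_pow, hs, hru, hu]
  obtain ⟨A, hA⟩ := pow_of_assoc d _ hd
  obtain ⟨B, hB⟩ := pow_of_assoc e _ he
  have hAB : A ^ p - B ^ p = C (2 * η) := by
    rw [hA, hB, map_mul, hC2]
    ring
  -- primitive p-th root of unity
  have hpk : ((p : ℕ) : k) ≠ 0 := by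
    rw [Ne, CharP.cast_eq_zero_iff k ℓ]
    intro hd
    rcases (Nat.Prime.eq_one_or_self_of_dvd hp ℓ hd) with h1 | h1
    · exact hℓ1 h1
    · exact hpℓ h1.symm
  haveI : NeZero ((p : ℕ) : k) := ⟨hpk⟩
  obtain ⟨ζ, hζ⟩ := IsAlgClosed.exists_root (cyclotomic p k) (by
    rw [degree_cyclotomic]
    simp only [Ne, Nat.cast_eq_zero]
    exact fun hc => (Nat.totient_pos.mpr hp.pos).ne' hc)
  have hζprim : IsPrimitiveRoot ζ p := (isRoot_cyclotomic_iff).mp hζ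
  have hζp : ζ ^ p = 1 := hζprim.pow_eq_one
  have hζ1 : ζ ≠ 1 := hζprim.ne_one hp.one_lt
  have hζ1' : (ζ - 1 : k) ≠ 0 := sub_ne_zero.mpr hζ1
  -- A - B and A - ζB are units
  have hCunit : IsUnit (C (2 * η) : k[X]) := isUnit_C.mpr (Ne.isUnit h2η)
  have unit_of_dvd : ∀ f : k[X], f ∣ C (2 * η) → ∃ c : k, f = C c := by
    intro f hf
    obtain ⟨r, _, hru⟩ := Polynomial.isUnit_iff.mp (isUnit_of_dvd_unit hf hCunit)
    exact ⟨r, hru.symm⟩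
  obtain ⟨c₁, hc₁⟩ := unit_of_dvd (A - B) (hAB ▸ sub_dvd_pow_sub_pow A B p)
  obtain ⟨c₂, hc₂⟩ := unit_of_dvd (A - C ζ * B) (by
    have : (C ζ * B) ^ p = B ^ p := by
      rw [mul_pow, ← C_pow, hζp, map_one, one_mul]
    have hdvd := sub_dvd_pow_sub_pow A (C ζ * B) p
    rw [this, hAB] at hdvd
    exact hdvd)
  -- B is constant
  have hBconst : C (ζ - 1) * B = C c₁ - C c₂ := by
    rw [← hc₁, ← hc₂, map_sub, map_one]
    ring
  have hBc : B = C ((ζ - 1)⁻¹ * (c₁ - c₂)) := by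
    have h1 : C ((ζ - 1)⁻¹) * (C (ζ - 1) * B) = C ((ζ - 1)⁻¹) * (C c₁ - C c₂) := by
      rw [hBconst]
    rw [← mul_assoc, ← map_mul, inv_mul_cancel₀ hζ1', map_one, one_mul] at h1
    rw [h1, map_mul, map_sub]
  -- Y is constant
  have hY : Y = C (((ζ - 1)⁻¹ * (c₁ - c₂)) ^ p + η) := by
    have hYe : Y - C η = C (((ζ - 1)⁻¹ * (c₁ - c₂)) ^ p) := by
      rw [← hB, hBc, ← C_pow]
    rw [map_add]
    linear_combination hYe
  -- X is constant
  have hXdeg : X.natDegree = 0 := by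
    have hx : X ^ p = C ((((ζ - 1)⁻¹ * (c₁ - c₂)) ^ p + η) ^ 2 + 1) := by
      rw [h, hY, ← C_pow, ← C_1 (R := k), ← C_add]
    have hdeg := congrArg natDegree hx
    rw [natDegree_pow, natDegree_C] at hdeg
    exact (Nat.mul_eq_zero.mp hdeg).resolve_left hp.pos.ne'
  exact ⟨(natDegree_eq_zero.mp hXdeg).imp (fun a ha => ha.symm), ⟨_, hY⟩⟩
end

section
/- Let k be an algebraically closed field of characteristic ℓ ≠ 2, and let q be an odd prime with q ≠ ℓ. Suppose k contains a primitive q-th root of unity ζ. If X, Y ∈ k[T] satisfy X² = Y^q + 1, then X and Y are constants. -/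
open Polynomial

theorem stmt_11 (k : Type*) [Field k] [IsAlgClosed k] (ℓ : ℕ) [CharP k ℓ] (hℓ2 : ℓ ≠ 2)
    (q : ℕ) (hq : q.Prime) (hodd : Odd q) (hqℓ : q ≠ ℓ)
    (ζ : k) (hζ : IsPrimitiveRoot ζ q)
    (X Y : Polynomial k) (h : X ^ 2 = Y ^ q + 1) :
    (∃ a : k, X = C a) ∧ (∃ b : k, Y = C b) := by
  classical
  have hq1 : 1 < q := hq.one_lt
  have hqpos : 0 < q := hq.pos
  -- characteristic ≠ 2
  have two_ne : (2 : k) ≠ 0 := by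
    intro h2
    have hd : ℓ ∣ 2 := (CharP.cast_eq_zero_iff k ℓ 2).mp (by exact_mod_cast h2)
    rcases (Nat.dvd_prime Nat.prime_two).mp hd with h1 | h1
    · exact CharP.char_ne_one k ℓ h1
    · exact hℓ2 h1
  -- it suffices to show Y is constant
  suffices hY : ∃ b : k, Y = C b by
    obtain ⟨b, rfl⟩ := hY
    refine ⟨⟨X.coeff 0, ?_⟩, b, rfl⟩
    have hdeg : (X ^ 2).natDegree = 0 := by
      rw [h, ← C_pow, ← C_1, ← C_add, natDegree_C]
    rw [natDegree_pow] at hdeg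
    have hx : X.natDegree = 0 := by omega
    exact Polynomial.eq_C_of_natDegree_eq_zero hx
  -- the factorization Y^q + 1 = ∏ (Y + C μ)
  set S := Polynomial.nthRootsFinset q (1 : k) with hS
  have hsplit : Y ^ q + 1 = ∏ μ ∈ S, (Y + C μ) := by
    have h0 := Polynomial.X_pow_sub_one_eq_prod hqpos hζ
    have h1 := congrArg (Polynomial.aeval (-Y)) h0
    simp only [map_sub, map_pow, map_one, map_prod, Polynomial.aeval_X, Polynomial.aeval_C] at h1
    have hcard : S.card = q := hζ.card_nthRootsFinset
    have hneg : ∏ μ ∈ S, (-Y - (algebraMap k (Polynomial k)) μ) =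
        (-1 : Polynomial k) ^ S.card * ∏ μ ∈ S, (Y + C μ) := by
      rw [← Finset.prod_const, ← Finset.prod_mul_distrib]
      refine Finset.prod_congr rfl fun μ _ => ?_
      simp only [Polynomial.algebraMap_eq]
      ring
    rw [hneg, hcard, hodd.neg_one_pow] at h1
    have : (-Y) ^ q = -Y ^ q := Odd.neg_pow hodd Y
    rw [this] at h1
    linear_combination -h1
  -- each factor is a square
  have key : ∀ μ ∈ S, ∃ β : Polynomial k, β ^ 2 = Y + C μ := by
    intro μ hμ
    have hmul : (Y + C μ) * ∏ ν ∈ S.erase μ, (Y + C ν) = X ^ 2 := by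
      rw [h, hsplit]
      exact Finset.mul_prod_erase S (fun ν => Y + C ν) hμ
    have hcp : IsCoprime (Y + C μ) (∏ ν ∈ S.erase μ, (Y + C ν)) := by
      refine IsCoprime.prod_right fun ν hν => ?_
      have hne : μ - ν ≠ 0 := sub_ne_zero.mpr (Finset.ne_of_mem_erase hν).symm
      refine ⟨C (μ - ν)⁻¹, -C (μ - ν)⁻¹, ?_⟩
      have : C (μ - ν)⁻¹ * (Y + C μ) + -C (μ - ν)⁻¹ * (Y + C ν) = C ((μ - ν)⁻¹ * (μ - ν)) := by
        rw [C_mul, C_sub]; ring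
      rw [this, inv_mul_cancel₀ hne, C_1]
    obtain ⟨d, hd⟩ := exists_associated_pow_of_mul_eq_pow
      (hcp.isUnit_of_dvd' (gcd_dvd_left _ _) (gcd_dvd_right _ _)) hmul
    obtain ⟨u, hu⟩ := hd
    obtain ⟨c, hc, hcu⟩ := Polynomial.isUnit_iff.mp u.isUnit
    obtain ⟨e, he⟩ := IsAlgClosed.exists_pow_nat_eq c (n := 2) (by norm_num)
    refine ⟨d * C e, ?_⟩
    rw [mul_pow, ← C_pow, he, hcu, hu]
  -- extract square roots of Y + 1 and Y + ζ
  have h1S : (1 : k) ∈ S := by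
    rw [hS, Polynomial.mem_nthRootsFinset hqpos]; exact one_pow q
  have hζS : ζ ∈ S := by
    rw [hS, Polynomial.mem_nthRootsFinset hqpos]; exact hζ.pow_eq_one
  obtain ⟨β0, hβ0⟩ := key 1 h1S
  obtain ⟨β1, hβ1⟩ := key ζ hζS
  have hζ1 : ζ ≠ 1 := hζ.ne_one hq1
  have hdiff : (β0 - β1) * (β0 + β1) = C (1 - ζ) := by
    have : β0 ^ 2 - β1 ^ 2 = C (1 - ζ) := by rw [hβ0, hβ1, C_sub]; ring
    linear_combination this
  have hunit : IsUnit ((β0 - β1) * (β0 + β1)) := by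
    rw [hdiff]
    exact Polynomial.isUnit_C.mpr (isUnit_iff_ne_zero.mpr (sub_ne_zero.mpr hζ1.symm))
  obtain ⟨r, hru, hr⟩ := Polynomial.isUnit_iff.mp (isUnit_of_mul_isUnit_left hunit)
  obtain ⟨s, hsu, hs⟩ := Polynomial.isUnit_iff.mp (isUnit_of_mul_isUnit_right hunit)
  -- β0 is constant
  have hβ0c : β0 = C ((r + s) / 2) := by
    have h2 : C (2 : k) * β0 = C (r + s) := by
      rw [C_add, hr, hs]; simp only [map_ofNat]; ring
    have h2' : C (2 : k) * C ((r + s) / 2) = C (r + s) := by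
      rw [← C_mul, mul_div_cancel₀ _ two_ne]
    exact mul_left_cancel₀ (by simpa using two_ne) (h2.trans h2'.symm)
  refine ⟨((r + s) / 2) ^ 2 - 1, ?_⟩
  have : Y = β0 ^ 2 - C 1 := by linear_combination -hβ0
  rw [this, hβ0c, ← C_pow, ← C_sub]
end

section
/- Let k be an algebraically closed field of characteristic ℓ, and let p, q be primes different from ℓ (possibly equal). Let m, n > 1 be integers with p ∣ m and q ∣ n, and assume k contains primitive p-th and q-th roots of unity. If X, Y ∈ k[T] satisfy X^m − Y^n = 1, then X and Y are constants. -/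
open Polynomial UniqueFactorizationMonoid UniqueFactorizationDomain

private lemma char_cast_ne_zero' (k : Type*) [Field k] (ℓ : ℕ) [CharP k ℓ] {p : ℕ}
    (hp : p.Prime) (hpℓ : p ≠ ℓ) : (p : k) ≠ 0 := by
  intro h
  rw [CharP.cast_eq_zero_iff k ℓ] at h
  rcases hp.eq_one_or_self_of_dvd ℓ h with h1 | h1
  · exact CharP.char_ne_one k ℓ h1
  · exact hpℓ h1.symm

private lemma aux_prime_case (k : Type*) [Field k] [IsAlgClosed k] (ℓ : ℕ) [CharP k ℓ]
    (p q : ℕ) (hp : p.Prime) (hq : q.Prime) (hpℓ : p ≠ ℓ) (hqℓ : q ≠ ℓ) :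
    ∀ N (X Y : Polynomial k), X.natDegree + Y.natDegree ≤ N → X ^ p - Y ^ q = 1 →
      X.natDegree = 0 ∧ Y.natDegree = 0 := by
  classical
  intro N
  induction N using Nat.strong_induction_on with
  | _ N IH =>
    intro X Y hdeg h
    by_cases hX0 : X = 0
    · subst hX0
      rw [zero_pow hp.ne_zero] at h
      have hYq : Y ^ q = -1 := by linear_combination -h
      have h0 : (Y ^ q).natDegree = 0 := by rw [hYq]; simp
      rw [natDegree_pow] at h0
      exact ⟨by simp, (Nat.mul_eq_zero.mp h0).resolve_left hq.ne_zero⟩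
    by_cases hY0 : Y = 0
    · subst hY0
      rw [zero_pow hq.ne_zero] at h
      have hXp : X ^ p = 1 := by linear_combination h
      have h0 : (X ^ p).natDegree = 0 := by rw [hXp]; simp
      rw [natDegree_pow] at h0
      exact ⟨(Nat.mul_eq_zero.mp h0).resolve_left hp.ne_zero, by simp⟩
    have hcpq : IsCoprime (X ^ p) (Y ^ q) := ⟨1, -1, by linear_combination h⟩
    have habc := Polynomial.abc (a := X ^ p) (b := -(Y ^ q)) (c := -(1 : Polynomial k))
      (pow_ne_zero p hX0) (neg_ne_zero.mpr (pow_ne_zero q hY0))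
      (neg_ne_zero.mpr one_ne_zero) hcpq.neg_right
      (by linear_combination h)
    rcases habc with ⟨hda, hdb, -⟩ | ⟨hda, hdb, -⟩
    · exfalso
      have hprod : X ^ p * -(Y ^ q) * -(1 : Polynomial k) = X ^ p * Y ^ q := by ring
      rw [hprod] at hda hdb
      have hrad : radical (X ^ p * Y ^ q) = radical X * radical Y := by
        rw [radical_mul hcpq.isRelPrime, radical_pow X hp.ne_zero, radical_pow Y hq.ne_zero]
      rw [hrad, natDegree_pow] at hda
      rw [hrad, natDegree_neg, natDegree_pow] at hdb
      have h1 : (radical X).natDegree ≤ X.natDegree :=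
        natDegree_le_of_dvd (radical_dvd_self (a := X)) hX0
      have h2 : (radical Y).natDegree ≤ Y.natDegree :=
        natDegree_le_of_dvd (radical_dvd_self (a := Y)) hY0
      have h3 : (radical X * radical Y).natDegree
          = (radical X).natDegree + (radical Y).natDegree :=
        natDegree_mul (radical_ne_zero (a := X)) (radical_ne_zero (a := Y))
      have hpX : 2 * X.natDegree ≤ p * X.natDegree :=
        Nat.mul_le_mul_right _ hp.two_le
      have hqY : 2 * Y.natDegree ≤ q * Y.natDegree :=
        Nat.mul_le_mul_right _ hq.two_le
      omega
    · -- derivatives vanish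
      have hdX : derivative X = 0 := by
        rw [derivative_pow] at hda
        rcases mul_eq_zero.mp hda with h' | h'
        · rcases mul_eq_zero.mp h' with h'' | h''
          · exact absurd (C_eq_zero.mp h'') (char_cast_ne_zero' k ℓ hp hpℓ)
          · exact absurd h'' (pow_ne_zero _ hX0)
        · exact h'
      have hdY : derivative Y = 0 := by
        rw [derivative_neg, neg_eq_zero, derivative_pow] at hdb
        rcases mul_eq_zero.mp hdb with h' | h'
        · rcases mul_eq_zero.mp h' with h'' | h''
          · exact absurd (C_eq_zero.mp h'') (char_cast_ne_zero' k ℓ hq hqℓ)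
          · exact absurd h'' (pow_ne_zero _ hY0)
        · exact h'
      rcases CharP.char_is_prime_or_zero k ℓ with hℓp | hℓ0
      · haveI : ExpChar k ℓ := ExpChar.prime hℓp
        haveI : ExpChar (Polynomial k) ℓ := ExpChar.prime hℓp
        set f : Polynomial k :=
          (contract ℓ X).map ((frobeniusEquiv k ℓ).symm : k →+* k) with hf
        set g : Polynomial k :=
          (contract ℓ Y).map ((frobeniusEquiv k ℓ).symm : k →+* k) with hg
        have hcomp : (frobenius k ℓ).comp ((frobeniusEquiv k ℓ).symm : k →+* k)
            = RingHom.id k := by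
          ext x
          exact frobenius_apply_frobeniusEquiv_symm k ℓ x
        have hmapf : f.map (frobenius k ℓ) = contract ℓ X := by
          rw [hf, Polynomial.map_map, hcomp, Polynomial.map_id]
        have hmapg : g.map (frobenius k ℓ) = contract ℓ Y := by
          rw [hg, Polynomial.map_map, hcomp, Polynomial.map_id]
        have hXf : f ^ ℓ = X := by
          rw [← map_frobenius_expand, map_expand, hmapf, expand_contract ℓ hdX hℓp.ne_zero]
        have hYg : g ^ ℓ = Y := by
          rw [← map_frobenius_expand, map_expand, hmapg, expand_contract ℓ hdY hℓp.ne_zero]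
        have key : (f ^ p - g ^ q) ^ ℓ = 1 ^ ℓ := by
          rw [sub_pow_expChar, one_pow, pow_right_comm f p ℓ, pow_right_comm g q ℓ,
            hXf, hYg]
          exact h
        have key2 : f ^ p - g ^ q = 1 := by
          apply frobenius_inj (Polynomial k) ℓ
          rw [frobenius_def, frobenius_def]
          exact key
        have hdfX : X.natDegree = ℓ * f.natDegree := by rw [← hXf, natDegree_pow]
        have hdgY : Y.natDegree = ℓ * g.natDegree := by rw [← hYg, natDegree_pow]
        by_cases hz : f.natDegree + g.natDegree = 0
        · refine ⟨?_, ?_⟩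
          · rw [hdfX, (by omega : f.natDegree = 0), mul_zero]
          · rw [hdgY, (by omega : g.natDegree = 0), mul_zero]
        · have hsum : ℓ * (f.natDegree + g.natDegree)
              = X.natDegree + Y.natDegree := by rw [hdfX, hdgY]; ring
          have h2 : 2 * (f.natDegree + g.natDegree)
              ≤ ℓ * (f.natDegree + g.natDegree) :=
            Nat.mul_le_mul_right _ hℓp.two_le
          have hlt : f.natDegree + g.natDegree < N := by omega
          obtain ⟨hf0, hg0⟩ := IH _ hlt f g le_rfl key2
          exact ⟨by rw [hdfX, hf0, mul_zero], by rw [hdgY, hg0, mul_zero]⟩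
      · subst hℓ0
        haveI : CharZero k := CharP.charP_to_charZero k
        exact ⟨natDegree_eq_zero_of_derivative_eq_zero hdX,
          natDegree_eq_zero_of_derivative_eq_zero hdY⟩

theorem stmt_12 (k : Type*) [Field k] [IsAlgClosed k] (ℓ : ℕ) [CharP k ℓ]
    (p q : ℕ) (hp : p.Prime) (hq : q.Prime) (hpℓ : p ≠ ℓ) (hqℓ : q ≠ ℓ)
    (m n : ℕ) (hm : 1 < m) (hn : 1 < n) (hpm : p ∣ m) (hqn : q ∣ n)
    (ζp ζq : k) (hζp : IsPrimitiveRoot ζp p) (hζq : IsPrimitiveRoot ζq q)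
    (X Y : Polynomial k) (h : X ^ m - Y ^ n = 1) :
    (∃ a : k, X = C a) ∧ (∃ b : k, Y = C b) := by
  obtain ⟨m', hm'⟩ := hpm
  obtain ⟨n', hn'⟩ := hqn
  have heq : (X ^ m') ^ p - (Y ^ n') ^ q = 1 := by
    rw [← pow_mul, ← pow_mul, mul_comm m' p, mul_comm n' q, ← hm', ← hn']
    exact h
  obtain ⟨h1, h2⟩ := aux_prime_case k ℓ p q hp hq hpℓ hqℓ
    ((X ^ m').natDegree + (Y ^ n').natDegree) (X ^ m') (Y ^ n') le_rfl heq
  rw [natDegree_pow] at h1 h2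
  have hm'0 : m' ≠ 0 := by rintro rfl; omega
  have hn'0 : n' ≠ 0 := by rintro rfl; omega
  have hX : X.natDegree = 0 := (Nat.mul_eq_zero.mp h1).resolve_left hm'0
  have hY : Y.natDegree = 0 := (Nat.mul_eq_zero.mp h2).resolve_left hn'0
  exact ⟨(natDegree_eq_zero.mp hX).imp fun a ha => ha.symm,
    (natDegree_eq_zero.mp hY).imp fun b hb => hb.symm⟩
end

section
/- Let k be a finite field of characteristic ℓ, and let m, n > 1 be integers both coprime to ℓ. If X, Y ∈ k[T] satisfy X^m − Y^n = 1, then X and Y are constants in k. -/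
open Polynomial

theorem stmt_19 (k : Type*) [Field k] [Finite k] (ℓ : ℕ) [CharP k ℓ]
    (m n : ℕ) (hm : 1 < m) (hn : 1 < n) (hmℓ : ¬ℓ ∣ m) (hnℓ : ¬ℓ ∣ n)
    (X Y : Polynomial k) (h : X ^ m - Y ^ n = 1) :
    (∃ a : k, X = C a) ∧ (∃ b : k, Y = C b) := by
  have hℓp : ℓ.Prime := CharP.char_is_prime k ℓ
  have hmk : (m : k) ≠ 0 := by
    rw [Ne, CharP.cast_eq_zero_iff k ℓ]; exact hmℓ
  have hnk : (n : k) ≠ 0 := by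
    rw [Ne, CharP.cast_eq_zero_iff k ℓ]; exact hnℓ
  suffices H : ∀ N (X Y : Polynomial k), X.natDegree + Y.natDegree = N →
      X ^ m - Y ^ n = 1 → X.natDegree = 0 ∧ Y.natDegree = 0 by
    obtain ⟨h1, h2⟩ := H _ X Y rfl h
    exact ⟨⟨X.coeff 0, Polynomial.eq_C_of_natDegree_eq_zero h1⟩,
           ⟨Y.coeff 0, Polynomial.eq_C_of_natDegree_eq_zero h2⟩⟩
  intro N
  induction N using Nat.strong_induction_on with
  | _ N IH =>
    intro X Y hdeg h
    -- dispatch X = 0 and Y = 0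
    by_cases hX0 : X = 0
    · subst hX0
      have hYn : Y ^ n = -1 := by
        have := h
        rw [zero_pow (by omega : m ≠ 0)] at this
        linear_combination -this
      have : (Y ^ n).natDegree = 0 := by rw [hYn]; simp
      rw [natDegree_pow] at this
      rcases Nat.mul_eq_zero.mp this with h' | h'
      · omega
      · exact ⟨natDegree_zero, h'⟩
    by_cases hY0 : Y = 0
    · subst hY0
      have hXn : X ^ m = 1 := by
        have := h
        rw [zero_pow (by omega : n ≠ 0)] at this
        linear_combination this
      have : (X ^ m).natDegree = 0 := by rw [hXn]; simp
      rw [natDegree_pow] at this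
      rcases Nat.mul_eq_zero.mp this with h' | h'
      · omega
      · exact ⟨h', natDegree_zero⟩
    -- derivative equation
    have hD : C (m : k) * X ^ (m - 1) * derivative X
        = C (n : k) * Y ^ (n - 1) * derivative Y := by
      have h' := congrArg derivative h
      rw [derivative_sub, derivative_one, sub_eq_zero, derivative_pow, derivative_pow] at h'
      exact h'
    have hCm : (C (m : k)) ≠ 0 := by rw [Ne, C_eq_zero]; exact hmk
    have hCn : (C (n : k)) ≠ 0 := by rw [Ne, C_eq_zero]; exact hnk
    -- coprimality
    have hx : X ^ (m - 1) * X = X ^ m := by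
      rw [← pow_succ, Nat.sub_add_cancel hm.le]
    have hy : Y ^ (n - 1) * Y = Y ^ n := by
      rw [← pow_succ, Nat.sub_add_cancel hn.le]
    have hc : IsCoprime X Y := ⟨X ^ (m - 1), -Y ^ (n - 1), by
      rw [neg_mul, hx, hy, ← sub_eq_add_neg, h]⟩
    by_cases hX' : derivative X = 0
    · -- then derivative Y = 0 too, and we descend via `contract`
      have hY' : derivative Y = 0 := by
        have h0 : C (n : k) * Y ^ (n - 1) * derivative Y = 0 := by
          rw [← hD, hX', mul_zero]
        rcases mul_eq_zero.mp h0 with h1 | h1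
        · rcases mul_eq_zero.mp h1 with h2 | h2
          · exact absurd h2 hCn
          · exact absurd h2 (pow_ne_zero _ hY0)
        · exact h1
      set g := contract ℓ X with hgdef
      set w := contract ℓ Y with hwdef
      have hgX : expand k ℓ g = X := expand_contract ℓ hX' hℓp.ne_zero
      have hwY : expand k ℓ w = Y := expand_contract ℓ hY' hℓp.ne_zero
      have heq : g ^ m - w ^ n = 1 := by
        apply expand_injective hℓp.pos
        rw [map_sub, map_pow, map_pow, hgX, hwY, map_one, h]
      have hdX : X.natDegree = g.natDegree * ℓ := by rw [← hgX, natDegree_expand]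
      have hdY : Y.natDegree = w.natDegree * ℓ := by rw [← hwY, natDegree_expand]
      rcases Nat.eq_zero_or_pos (g.natDegree + w.natDegree) with h0 | hpos
      · have hg0 : g.natDegree = 0 := by omega
        have hw0 : w.natDegree = 0 := by omega
        exact ⟨by rw [hdX, hg0, zero_mul], by rw [hdY, hw0, zero_mul]⟩
      · have hlt : g.natDegree + w.natDegree < N := by
          have h2 : 2 ≤ ℓ := hℓp.two_le
          calc g.natDegree + w.natDegree < (g.natDegree + w.natDegree) * ℓ := by
                nlinarith
            _ = N := by rw [← hdeg, hdX, hdY]; ring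
        obtain ⟨hg0, hw0⟩ := IH _ hlt g w rfl heq
        exact ⟨by rw [hdX, hg0, zero_mul], by rw [hdY, hw0, zero_mul]⟩
    · -- derivative X ≠ 0; derive a contradiction
      exfalso
      have hY' : derivative Y ≠ 0 := by
        intro hY'
        apply hX'
        have h0 : C (m : k) * X ^ (m - 1) * derivative X = 0 := by
          rw [hD, hY', mul_zero]
        rcases mul_eq_zero.mp h0 with h1 | h1
        · rcases mul_eq_zero.mp h1 with h2 | h2
          · exact absurd h2 hCm
          · exact absurd h2 (pow_ne_zero _ hX0)
        · exact h1
      have hdX0 : X.natDegree ≠ 0 := by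
        intro h0
        apply hX'
        rw [Polynomial.eq_C_of_natDegree_eq_zero h0, derivative_C]
      have hdY0 : Y.natDegree ≠ 0 := by
        intro h0
        apply hY'
        rw [Polynomial.eq_C_of_natDegree_eq_zero h0, derivative_C]
      have hun : IsUnit (C (n : k)) := isUnit_C.mpr (isUnit_iff_ne_zero.mpr hnk)
      have hum : IsUnit (C (m : k)) := isUnit_C.mpr (isUnit_iff_ne_zero.mpr hmk)
      -- X^(m-1) ∣ derivative Y
      have hdvd1 : X ^ (m - 1) ∣ derivative Y := by
        have h1 : X ^ (m - 1) ∣ C (n : k) * (Y ^ (n - 1) * derivative Y) := by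
          rw [← mul_assoc, ← hD]
          exact ⟨C (m : k) * derivative X, by ring⟩
        have h2 : X ^ (m - 1) ∣ Y ^ (n - 1) * derivative Y := (hun.dvd_mul_left).mp h1
        exact (hc.pow : IsCoprime (X ^ (m - 1)) (Y ^ (n - 1))).dvd_of_dvd_mul_left h2
      have hdvd2 : Y ^ (n - 1) ∣ derivative X := by
        have h1 : Y ^ (n - 1) ∣ C (m : k) * (X ^ (m - 1) * derivative X) := by
          rw [← mul_assoc, hD]
          exact ⟨C (n : k) * derivative Y, by ring⟩
        have h2 : Y ^ (n - 1) ∣ X ^ (m - 1) * derivative X := (hum.dvd_mul_left).mp h1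
        exact (hc.symm.pow : IsCoprime (Y ^ (n - 1)) (X ^ (m - 1))).dvd_of_dvd_mul_left h2
      have hle1 : (m - 1) * X.natDegree ≤ (derivative Y).natDegree := by
        have := natDegree_le_of_dvd hdvd1 hY'
        rwa [natDegree_pow] at this
      have hle2 : (n - 1) * Y.natDegree ≤ (derivative X).natDegree := by
        have := natDegree_le_of_dvd hdvd2 hX'
        rwa [natDegree_pow] at this
      have hlt1 : (derivative Y).natDegree < Y.natDegree := natDegree_derivative_lt hdY0
      have hlt2 : (derivative X).natDegree < X.natDegree := natDegree_derivative_lt hdX0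
      have h1 : X.natDegree ≤ (m - 1) * X.natDegree :=
        Nat.le_mul_of_pos_left _ (by omega)
      have h2 : Y.natDegree ≤ (n - 1) * Y.natDegree :=
        Nat.le_mul_of_pos_left _ (by omega)
      omega
end
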